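/- (Lemma 2.2) Let g = ∇f(x) with ‖g‖ > ε_g, suppose |⟨g, ∇²f(x) g⟩|/‖g‖² ≤ ε_H, and set d = -g/‖g‖^{1/2}, where ε_g, ε_H ∈ (0,1). Then the smallest nonnegative integer j_k such that f(x + θ^{j_k} d) < f(x) - (η/6) θ^{3 j_k} ‖d‖³ exists and satisfies j_k ≤ [log_θ( min{5/3, (L_H+η)^{-1/2}} · min{ε_g^{1/2} ε_H^{-1}, 1} )]_+ + 1, and moreover f(x) - f(x + θ^{j_k} d) ≥ (η/6)·min{1, θ³/(L_H+η)^{3/2}, 125 θ³/27} · min{ε_g³ ε_H^{-3}, ε_g^{3/2}}. -/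

import Mathlib

open scoped RealInnerProductSpace

/-- 1-D cubic upper bound from Lipschitz second derivative (one-sided). -/
lemma cubic_bound_1d (φ φ1 φ2 : ℝ → ℝ) (L : ℝ)
    (h1 : ∀ t, HasDerivAt φ (φ1 t) t) (h2 : ∀ t, HasDerivAt φ1 (φ2 t) t)
    (hlip : ∀ t, 0 ≤ t → φ2 t - φ2 0 ≤ L * t) :
    φ 1 ≤ φ 0 + φ1 0 + φ2 0 / 2 + L / 6 := by
  set χ : ℝ → ℝ := fun t => φ1 t - φ1 0 - t * φ2 0 - L * t ^ 2 / 2 with hχ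
  have hχ' : ∀ t, HasDerivAt χ (φ2 t - φ2 0 - L * t) t := by
    intro t
    have : HasDerivAt (fun t : ℝ => φ1 t - φ1 0 - t * φ2 0 - L * t ^ 2 / 2)
        (φ2 t - φ2 0 - (L * (2 * t) / 2)) t := by
      have ha := (h2 t).sub_const (φ1 0)
      have hb : HasDerivAt (fun t : ℝ => t * φ2 0) (φ2 0) t := by
        simpa using (hasDerivAt_id t).mul_const (φ2 0)
      have hc : HasDerivAt (fun t : ℝ => L * t ^ 2 / 2) (L * (2 * t) / 2) t := by
        have := ((hasDerivAt_pow 2 t).const_mul L).div_const 2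
        simpa using this
      exact (ha.sub hb).sub hc
    simpa [hχ] using this.congr_deriv (by ring)
  have hχanti : AntitoneOn χ (Set.Ici (0:ℝ)) := by
    apply AntitoneOn.mono (antitoneOn_of_deriv_nonpos (convex_Ici 0) ?_ ?_ ?_) le_rfl
    · exact fun t _ => ((hχ' t).differentiableAt).continuousAt.continuousWithinAt
    · intro t ht
      exact ((hχ' t).differentiableAt).differentiableWithinAt
    · intro t ht
      rw [interior_Ici] at ht
      rw [(hχ' t).deriv]
      have := hlip t (le_of_lt ht)
      linarith
  have hχle : ∀ t, 0 ≤ t → χ t ≤ 0 := by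
    intro t ht
    have := hχanti (Set.self_mem_Ici) (Set.mem_Ici.2 ht) ht
    simpa [hχ] using this
  set ψ : ℝ → ℝ := fun t => φ t - φ 0 - t * φ1 0 - t ^ 2 / 2 * φ2 0 - L * t ^ 3 / 6 with hψ
  have hψ' : ∀ t, HasDerivAt ψ (χ t) t := by
    intro t
    have ha := (h1 t).sub_const (φ 0)
    have hb : HasDerivAt (fun t : ℝ => t * φ1 0) (φ1 0) t := by
      simpa using (hasDerivAt_id t).mul_const (φ1 0)
    have hc : HasDerivAt (fun t : ℝ => t ^ 2 / 2 * φ2 0) ((2 * t) / 2 * φ2 0) t := by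
      have := ((hasDerivAt_pow 2 t).div_const 2).mul_const (φ2 0)
      simpa using this
    have hd : HasDerivAt (fun t : ℝ => L * t ^ 3 / 6) (L * (3 * t ^ 2) / 6) t := by
      have := ((hasDerivAt_pow 3 t).const_mul L).div_const 6
      simpa [mul_comm] using this
    have : HasDerivAt ψ (φ1 t - φ1 0 - (2 * t) / 2 * φ2 0 - L * (3 * t ^ 2) / 6) t :=
      ((ha.sub hb).sub hc).sub hd
    exact this.congr_deriv (by simp [hχ]; ring)
  have hψanti : AntitoneOn ψ (Set.Ici (0:ℝ)) := by
    apply antitoneOn_of_deriv_nonpos (convex_Ici 0)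
    · exact fun t _ => ((hψ' t).differentiableAt).continuousAt.continuousWithinAt
    · exact fun t _ => ((hψ' t).differentiableAt).differentiableWithinAt
    · intro t ht
      rw [interior_Ici] at ht
      rw [(hψ' t).deriv]
      exact hχle t (le_of_lt ht)
  have := hψanti (Set.self_mem_Ici) (Set.mem_Ici.2 (zero_le_one)) zero_le_one
  simp only [hψ] at this
  norm_num at this
  linarith


lemma cubic_upper_bound {n : ℕ} (f : EuclideanSpace ℝ (Fin n) → ℝ)
    (gradf : EuclideanSpace ℝ (Fin n) → EuclideanSpace ℝ (Fin n))
    (hessf : EuclideanSpace ℝ (Fin n) → EuclideanSpace ℝ (Fin n) →L[ℝ] EuclideanSpace ℝ (Fin n))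
    (hgrad : ∀ x, HasGradientAt f (gradf x) x)
    (hhess : ∀ x, HasFDerivAt gradf (hessf x) x)
    (L_H : ℝ) (hLH : 0 < L_H)
    (hlip : ∀ x y, ‖hessf x - hessf y‖ ≤ L_H * ‖x - y‖)
    (x p : EuclideanSpace ℝ (Fin n)) :
    f (x + p) ≤ f x + ⟪gradf x, p⟫ + ⟪hessf x p, p⟫ / 2 + L_H * ‖p‖ ^ 3 / 6 := by
  set γ : ℝ → EuclideanSpace ℝ (Fin n) := fun t => x + t • p with hγ
  have hγd : ∀ t : ℝ, HasDerivAt γ p t := by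
    intro t
    have : HasDerivAt (fun t : ℝ => t • p) ((1:ℝ) • p) t := (hasDerivAt_id t).smul_const p
    simpa [hγ] using this.const_add x
  have h1 : ∀ t : ℝ, HasDerivAt (fun t => f (γ t)) (⟪gradf (γ t), p⟫) t := by
    intro t
    have hF := (hgrad (γ t)).hasFDerivAt
    have := hF.comp_hasDerivAt t (hγd t)
    simpa [InnerProductSpace.toDual_apply_apply, Function.comp_def] using this
  have h2 : ∀ t : ℝ, HasDerivAt (fun t => ⟪gradf (γ t), p⟫) (⟪hessf (γ t) p, p⟫) t := by
    intro t
    have hg : HasDerivAt (fun t => gradf (γ t)) (hessf (γ t) p) t := by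
      have := (hhess (γ t)).comp_hasDerivAt t (hγd t)
      simpa [Function.comp_def] using this
    have := hg.inner ℝ (hasDerivAt_const t p)
    simpa using this
  have hlip1 : ∀ t : ℝ, 0 ≤ t →
      ⟪hessf (γ t) p, p⟫ - ⟪hessf (γ 0) p, p⟫ ≤ (L_H * ‖p‖ ^ 3) * t := by
    intro t ht
    have : ⟪hessf (γ t) p, p⟫ - ⟪hessf (γ 0) p, p⟫ = ⟪(hessf (γ t) - hessf (γ 0)) p, p⟫ := by
      simp [inner_sub_left]
    rw [this]
    calc ⟪(hessf (γ t) - hessf (γ 0)) p, p⟫ ≤ ‖(hessf (γ t) - hessf (γ 0)) p‖ * ‖p‖ :=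
          real_inner_le_norm _ _
      _ ≤ (‖hessf (γ t) - hessf (γ 0)‖ * ‖p‖) * ‖p‖ := by
          gcongr; exact (hessf (γ t) - hessf (γ 0)).le_opNorm p
      _ ≤ ((L_H * ‖γ t - γ 0‖) * ‖p‖) * ‖p‖ := by
          have := hlip (γ t) (γ 0); gcongr
      _ = (L_H * ‖p‖ ^ 3) * |t| := by
          have : γ t - γ 0 = t • p := by simp [hγ]
          rw [this, norm_smul]; simp [Real.norm_eq_abs]; ring
      _ = (L_H * ‖p‖ ^ 3) * t := by rw [abs_of_nonneg ht]
  have key := cubic_bound_1d (fun t => f (γ t)) (fun t => ⟪gradf (γ t), p⟫)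
      (fun t => ⟪hessf (γ t) p, p⟫) (L_H * ‖p‖ ^ 3) h1 h2 hlip1
  have e0 : γ 0 = x := by simp [hγ]
  have e1 : γ 1 = x + p := by simp [hγ]
  simp only [e0, e1] at key
  linarith

open scoped RealInnerProductSpace

lemma min_pow3 (a b : ℝ) (ha : 0 ≤ a) (hb : 0 ≤ b) : (min a b) ^ 3 = min (a ^ 3) (b ^ 3) := by
  rcases le_total a b with h | h
  · rw [min_eq_left h, min_eq_left (pow_le_pow_left₀ ha h 3)]
  · rw [min_eq_right h, min_eq_right (pow_le_pow_left₀ hb h 3)]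

lemma min_mul_right' (a b c : ℝ) (hc : 0 ≤ c) : min a b * c = min (a * c) (b * c) := by
  rcases le_total a b with h | h
  · rw [min_eq_left h, min_eq_left (by nlinarith)]
  · rw [min_eq_right h, min_eq_right (by nlinarith)]

lemma sqrt_cube (a : ℝ) (ha : 0 ≤ a) : Real.sqrt a ^ 3 = a ^ ((3:ℝ)/2) := by
  rw [Real.sqrt_eq_rpow, ← Real.rpow_natCast (a ^ ((1:ℝ)/2)) 3, ← Real.rpow_mul ha]
  norm_num

lemma alg_final (m b e : ℝ) (hm : 0 < m) (hb0 : 0 < b) (hb1 : b ≤ 1) (he : 0 < e) :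
    min 1 (m * b) * e ≥ min 1 m * (b * e) := by
  rcases le_total m 1 with h | h
  · rw [min_eq_right h, min_eq_right (by nlinarith)]
    ring_nf; nlinarith
  · rw [min_eq_left h]
    have h1 : min 1 (m * b) ≥ b := le_min hb1 (by nlinarith)
    nlinarith

/-- Lemma 2.2: line search along the scaled negative gradient direction. -/
theorem gradient_step_linesearch
    {n : ℕ} (f : EuclideanSpace ℝ (Fin n) → ℝ)
    (gradf : EuclideanSpace ℝ (Fin n) → EuclideanSpace ℝ (Fin n))
    (hessf : EuclideanSpace ℝ (Fin n) → EuclideanSpace ℝ (Fin n) →L[ℝ] EuclideanSpace ℝ (Fin n))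
    (hf : ContDiff ℝ 2 f)
    (hgrad : ∀ x, HasGradientAt f (gradf x) x)
    (hhess : ∀ x, HasFDerivAt gradf (hessf x) x)
    (L_H : ℝ) (hLH : 0 < L_H)
    (hlip : ∀ x y, ‖hessf x - hessf y‖ ≤ L_H * ‖x - y‖)
    (θ η ε_g ε_H : ℝ) (hθ : θ ∈ Set.Ioo (0:ℝ) 1) (hη : 0 < η)
    (hεg : ε_g ∈ Set.Ioo (0:ℝ) 1) (hεH : ε_H ∈ Set.Ioo (0:ℝ) 1)
    (x : EuclideanSpace ℝ (Fin n)) (hgnorm : ‖gradf x‖ > ε_g)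
    (hcurv : |⟪gradf x, hessf x (gradf x)⟫| / ‖gradf x‖^2 ≤ ε_H)
    (d : EuclideanSpace ℝ (Fin n)) (hd : d = -(Real.sqrt ‖gradf x‖)⁻¹ • gradf x) :
    ∃ jk : ℕ,
      (f (x + θ^jk • d) < f x - η/6 * θ^(3*jk) * ‖d‖^3) ∧
      (∀ j : ℕ, j < jk → ¬ (f (x + θ^j • d) < f x - η/6 * θ^(3*j) * ‖d‖^3)) ∧
      (jk : ℝ) ≤ max (Real.logb θ
        (min (5/3) (Real.sqrt (L_H+η))⁻¹ * min (Real.sqrt ε_g / ε_H) 1)) 0 + 1 ∧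
      f x - f (x + θ^jk • d) ≥
        η/6 * min 1 (min (θ^3/(L_H+η)^((3:ℝ)/2)) (125*θ^3/27)) *
          min (ε_g^3/ε_H^3) (ε_g^((3:ℝ)/2)) := by
  classical
  obtain ⟨hθ0, hθ1⟩ := hθ
  obtain ⟨hεg0, hεg1⟩ := hεg
  obtain ⟨hεH0, hεH1⟩ := hεH
  set g := gradf x with hg
  have hr0 : (0:ℝ) < ‖g‖ := lt_trans hεg0 hgnorm
  set q := Real.sqrt ‖g‖ with hqdef
  have hq0 : 0 < q := Real.sqrt_pos.2 hr0
  have hq2 : q ^ 2 = ‖g‖ := Real.sq_sqrt hr0.le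
  have hnd : ‖d‖ = q := by
    rw [hd, norm_smul]
    rw [norm_neg, Real.norm_eq_abs, abs_inv, abs_of_nonneg (Real.sqrt_nonneg _), ← hqdef,
      ← hq2]
    field_simp [hq0.ne']
  -- inner products
  have hgd : ⟪g, d⟫ = -q ^ 3 := by
    rw [hd, real_inner_smul_right, real_inner_self_eq_norm_sq, ← hq2]
    field_simp [hq0.ne']
  have hHg : |⟪g, hessf x g⟫| ≤ ε_H * q ^ 4 := by
    have h2 : (0:ℝ) < ‖g‖ ^ 2 := by positivity
    have := (div_le_iff₀ h2).1 hcurv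
    calc |⟪g, hessf x g⟫| ≤ ε_H * ‖g‖ ^ 2 := this
      _ = ε_H * q ^ 4 := by rw [← hq2]; ring
  have hHdd : ⟪hessf x d, d⟫ ≤ ε_H * q ^ 2 := by
    have expand : ⟪hessf x d, d⟫ = (q⁻¹)^2 * ⟪g, hessf x g⟫ := by
      rw [hd]
      simp only [neg_smul, map_neg, map_smul, inner_neg_neg, real_inner_smul_left,
        real_inner_smul_right]
      rw [real_inner_comm]
      ring
    rw [expand]
    have h1 : ⟪g, hessf x g⟫ ≤ ε_H * q ^ 4 := le_trans (le_abs_self _) hHg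
    calc (q⁻¹)^2 * ⟪g, hessf x g⟫ ≤ (q⁻¹)^2 * (ε_H * q ^ 4) :=
          mul_le_mul_of_nonneg_left h1 (by positivity)
      _ = ε_H * q ^ 2 := by field_simp [hq0.ne']
  -- step-size threshold
  set s := Real.sqrt (L_H + η) with hsdef
  have hs0 : 0 < s := Real.sqrt_pos.2 (by linarith)
  have hs2 : s ^ 2 = L_H + η := Real.sq_sqrt (by linarith)
  set A := min (5/3 : ℝ) s⁻¹ with hAdef
  set B := min (Real.sqrt ε_g / ε_H) 1 with hBdef
  have hA0 : 0 < A := lt_min (by norm_num) (inv_pos.2 hs0)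
  have hB0 : 0 < B := lt_min (div_pos (Real.sqrt_pos.2 hεg0) hεH0) one_pos
  set αbar := A * B with hαbardef
  have hαbar0 : 0 < αbar := mul_pos hA0 hB0
  have hsqeg : Real.sqrt ε_g < q := Real.sqrt_lt_sqrt hεg0.le hgnorm
  -- acceptance for all small steps
  have key : ∀ α : ℝ, 0 < α → α ≤ αbar →
      f (x + α • d) < f x - η/6 * α ^ 3 * ‖d‖ ^ 3 := by
    intro α hα hαle
    have hub := cubic_upper_bound f gradf hessf hgrad hhess L_H hLH hlip x (α • d)
    rw [← hg] at hub
    have e1 : ⟪g, α • d⟫ = α * (-q ^ 3) := by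
      rw [real_inner_smul_right, hgd]
    have e2 : ⟪hessf x (α • d), α • d⟫ ≤ α ^ 2 * (ε_H * q ^ 2) := by
      rw [(hessf x).map_smul, real_inner_smul_left, real_inner_smul_right]
      have : α * (α * ⟪hessf x d, d⟫) = α^2 * ⟪hessf x d, d⟫ := by ring
      rw [this]
      exact mul_le_mul_of_nonneg_left hHdd (by positivity)
    have e3 : ‖α • d‖ = α * q := by
      rw [norm_smul, Real.norm_eq_abs, abs_of_pos hα, hnd]
    have hub2 : f (x + α • d) ≤ f x + α * (-q^3) + (α^2 * (ε_H * q^2))/2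
        + L_H * (α * q)^3 / 6 := by
      rw [e1, e3] at hub
      linarith [e2]
    -- main strict inequality
    have h1 : α * ε_H ≤ 5/3 * Real.sqrt ε_g := by
      have hAle : A ≤ 5/3 := min_le_left _ _
      have hBle : B ≤ Real.sqrt ε_g / ε_H := min_le_left _ _
      have : α ≤ (5/3) * (Real.sqrt ε_g / ε_H) := by
        calc α ≤ A * B := hαle
          _ ≤ (5/3) * (Real.sqrt ε_g / ε_H) := by
              apply mul_le_mul hAle hBle hB0.le (by norm_num)
      calc α * ε_H ≤ (5/3) * (Real.sqrt ε_g / ε_H) * ε_H := by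
            apply mul_le_mul_of_nonneg_right this hεH0.le
        _ = 5/3 * Real.sqrt ε_g := by field_simp [hεH0.ne']
    have h3 : (L_H + η) * α ^ 2 ≤ 1 := by
      have hαs : α ≤ s⁻¹ := by
        calc α ≤ A * B := hαle
          _ ≤ s⁻¹ * 1 := by
              apply mul_le_mul (min_le_right _ _) (min_le_right _ _) hB0.le (by positivity)
          _ = s⁻¹ := mul_one _
      have : α ^ 2 ≤ (s⁻¹) ^ 2 := pow_le_pow_left₀ hα.le hαs 2
      calc (L_H + η) * α ^ 2 ≤ (L_H + η) * (s⁻¹)^2 := by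
            apply mul_le_mul_of_nonneg_left this (by linarith)
        _ = 1 := by rw [← hs2]; field_simp [hs0.ne']
    have hstrict : α^2 * ε_H * q^2 / 2 + (L_H + η) * α^3 * q^3 / 6 < α * q^3 := by
      have h1' : α * ε_H < 5/3 * q := lt_of_le_of_lt h1 (by linarith [hsqeg])
      have hαq2 : 0 < α * q^2 := by positivity
      have p1 : α^2 * ε_H * q^2 < 5/3 * α * q^3 := by
        have := mul_lt_mul_of_pos_left h1' hαq2
        calc α^2 * ε_H * q^2 = α * q^2 * (α * ε_H) := by ring
          _ < α * q^2 * (5/3 * q) := this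
          _ = 5/3 * α * q^3 := by ring
      have hαq3 : (0:ℝ) ≤ α * q^3 := by positivity
      have p2 : (L_H + η) * α^3 * q^3 ≤ α * q^3 := by
        have := mul_le_mul_of_nonneg_right h3 hαq3
        calc (L_H + η) * α^3 * q^3 = (L_H + η) * α^2 * (α * q^3) := by ring
          _ ≤ 1 * (α * q^3) := this
          _ = α * q^3 := one_mul _
      linarith
    rw [hnd]
    have hexp : L_H * (α * q)^3 / 6 = L_H * α^3 * q^3 / 6 := by ring
    rw [hexp] at hub2
    linarith
  -- existence of an accepted step
  have hex : ∃ j : ℕ, f (x + θ^j • d) < f x - η/6 * θ^(3*j) * ‖d‖^3 := by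
    obtain ⟨N0, hN0⟩ := exists_pow_lt_of_lt_one hαbar0 hθ1
    refine ⟨N0, ?_⟩
    have := key (θ^N0) (pow_pos hθ0 N0) hN0.le
    calc f (x + θ^N0 • d) < f x - η/6 * (θ^N0)^3 * ‖d‖^3 := this
      _ = f x - η/6 * θ^(3*N0) * ‖d‖^3 := by rw [← pow_mul, mul_comm 3 N0]
  set jk := Nat.find hex with hjk
  refine ⟨jk, Nat.find_spec hex, fun j hj => Nat.find_min hex hj, ?_, ?_⟩
  · -- iteration bound
    set lb := Real.logb θ αbar with hlb
    set N := ⌈max lb 0⌉₊ with hN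
    have hNlb : lb ≤ (N : ℝ) := le_trans (le_max_left _ _) (Nat.le_ceil _)
    have hθN : θ ^ N ≤ αbar := by
      have h1 : θ ^ (N:ℝ) ≤ θ ^ lb := Real.rpow_le_rpow_of_exponent_ge hθ0 hθ1.le hNlb
      have h2 : θ ^ (lb:ℝ) = αbar := Real.rpow_logb hθ0 (by linarith) hαbar0
      calc (θ:ℝ) ^ N = θ ^ (N:ℝ) := (Real.rpow_natCast θ N).symm
        _ ≤ θ ^ (lb:ℝ) := h1
        _ = αbar := h2
    have hPN : f (x + θ^N • d) < f x - η/6 * θ^(3*N) * ‖d‖^3 := by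
      have := key (θ^N) (pow_pos hθ0 N) hθN
      calc f (x + θ^N • d) < f x - η/6 * (θ^N)^3 * ‖d‖^3 := this
        _ = f x - η/6 * θ^(3*N) * ‖d‖^3 := by rw [← pow_mul, mul_comm 3 N]
    have hjkN : jk ≤ N := Nat.find_le hPN
    have : (N : ℝ) < max lb 0 + 1 := Nat.ceil_lt_add_one (le_max_right _ _)
    calc (jk : ℝ) ≤ (N : ℝ) := Nat.cast_le.2 hjkN
      _ ≤ max lb 0 + 1 := this.le
  · -- decrease bound
    set m := min (θ^3/(L_H+η)^((3:ℝ)/2)) (125*θ^3/27) with hm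
    set e := ε_g ^ ((3:ℝ)/2) with he
    set b := min (ε_g^((3:ℝ)/2)/ε_H^3) 1 with hb
    have he0 : 0 < e := Real.rpow_pos_of_pos hεg0 _
    have hLHη32 : (0:ℝ) < (L_H+η)^((3:ℝ)/2) := Real.rpow_pos_of_pos (by linarith) _
    have hm0 : 0 < m := lt_min (by positivity) (by positivity)
    have hb0 : 0 < b := lt_min (by positivity) one_pos
    have hb1 : b ≤ 1 := min_le_right _ _
    -- θ^3 * αbar^3 = m * b
    have hs3 : s ^ 3 = (L_H+η)^((3:ℝ)/2) := sqrt_cube _ (by linarith)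
    have hA3 : θ^3 * A^3 = m := by
      rw [hAdef, min_pow3 _ _ (by norm_num) (by positivity), hm]
      rw [mul_comm (θ^3) _, min_mul_right' _ _ _ (by positivity)]
      rw [min_comm]
      congr 1
      · rw [inv_pow, ← hs3]; field_simp
      · ring
    have hB3 : B^3 = b := by
      rw [hBdef, min_pow3 _ _ (by positivity) zero_le_one, hb]
      congr 1
      · rw [div_pow, sqrt_cube _ hεg0.le]
      · norm_num
    have hcube : θ^3 * αbar^3 = m * b := by
      rw [hαbardef, mul_pow, ← mul_assoc, hA3, hB3]
    -- min (ε_g^3/ε_H^3) e = b * e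
    have hbe : min (ε_g^3/ε_H^3) (ε_g^((3:ℝ)/2)) = b * e := by
      rw [hb, min_mul_right' _ _ _ he0.le, one_mul]
      congr 1
      rw [he, div_mul_eq_mul_div]
      congr 1
      rw [← Real.rpow_add hεg0]
      norm_num
    -- θ^(3*jk) ≥ min 1 (θ^3 * αbar^3)
    have hstep : min 1 (θ^3 * αbar^3) ≤ θ^(3*jk) := by
      rcases Nat.eq_zero_or_pos jk with h0 | hpos
      · rw [h0]; simpa using min_le_left 1 (θ^3 * αbar^3)
      · obtain ⟨j, hj⟩ : ∃ j, jk = j + 1 := ⟨jk - 1, (Nat.succ_pred_eq_of_pos hpos).symm⟩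
        have hnot : ¬ (f (x + θ^j • d) < f x - η/6 * θ^(3*j) * ‖d‖^3) :=
          Nat.find_min hex (by omega)
        have hgt : αbar < θ ^ j := by
          by_contra hcon
          push_neg at hcon
          apply hnot
          have := key (θ^j) (pow_pos hθ0 j) hcon
          calc f (x + θ^j • d) < f x - η/6 * (θ^j)^3 * ‖d‖^3 := this
            _ = f x - η/6 * θ^(3*j) * ‖d‖^3 := by rw [← pow_mul, mul_comm 3 j]
        calc min 1 (θ^3 * αbar^3) ≤ θ^3 * αbar^3 := min_le_right _ _
          _ ≤ θ^3 * (θ^j)^3 := by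
              apply mul_le_mul_of_nonneg_left (pow_le_pow_left₀ hαbar0.le hgt.le 3)
                (by positivity)
          _ = θ^(3*(j+1)) := by rw [← mul_pow, ← pow_succ', ← pow_mul, mul_comm 3 (j+1)]
          _ = θ^(3*jk) := by rw [hj]
    -- final chain
    have hnd3 : ‖d‖^3 = q^3 := by rw [hnd]
    have hdec : f x - f (x + θ^jk • d) > η/6 * θ^(3*jk) * q^3 := by
      rw [← hnd3]; linarith [Nat.find_spec hex]
    have hq3e : e ≤ q^3 := by
      rw [he, ← sqrt_cube _ hεg0.le]
      exact pow_le_pow_left₀ (Real.sqrt_nonneg _) hsqeg.le 3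
    have c1 : η/6 * min 1 (θ^3 * αbar^3) * q^3 ≤ η/6 * θ^(3*jk) * q^3 := by
      apply mul_le_mul_of_nonneg_right _ (by positivity)
      apply mul_le_mul_of_nonneg_left hstep (by positivity)
    have c2 : η/6 * min 1 (θ^3 * αbar^3) * e ≤ η/6 * min 1 (θ^3 * αbar^3) * q^3 := by
      apply mul_le_mul_of_nonneg_left hq3e
      positivity
    have c3 : η/6 * min 1 m * (b * e) ≤ η/6 * min 1 (m * b) * e := by
      have := alg_final m b e hm0 hb0 hb1 he0
      have hη6 : (0:ℝ) ≤ η/6 := by positivity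
      calc η/6 * min 1 m * (b * e) = η/6 * (min 1 m * (b * e)) := by ring
        _ ≤ η/6 * (min 1 (m * b) * e) := mul_le_mul_of_nonneg_left this hη6
        _ = η/6 * min 1 (m * b) * e := by ring
    rw [hbe]
    rw [hcube] at c1 c2
    linarith
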